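/- For every even integer k ≥ 4, the k-th Hermite coefficient of the ReLU function satisfies μ_k(φ) = (1/√(2π)) · (−1)^{(k−2)/2} · (k−3)!! / √(k!), where (k−3)!! denotes the double factorial of k−3. -/

import Mathlib

open MeasureTheory ProbabilityTheory

noncomputable section

/-- The ReLU function. -/
def relu (x : ℝ) : ℝ := max x 0

/-- The `k`-th probabilists' Hermite polynomial, as a function `ℝ → ℝ`. -/
def hermiteFun (k : ℕ) (z : ℝ) : ℝ := Polynomial.aeval z (Polynomial.hermite k)

/-- The `k`-th Hermite coefficient `μ_k(f) = E[f(g) h_k(g)] / √(E[h_k(g)²])`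
of a function `f : ℝ → ℝ`, with `g` a standard Gaussian. -/
def hermiteCoeff (f : ℝ → ℝ) (k : ℕ) : ℝ :=
  (∫ z, f z * hermiteFun k z ∂(gaussianReal 0 1)) /
    Real.sqrt (∫ z, hermiteFun k z ^ 2 ∂(gaussianReal 0 1))

open Polynomial Real Filter Set
open scoped Nat NNReal ENNReal

namespace S11

def gauss (x : ℝ) : ℝ := Real.exp (-(x ^ 2 / 2))

lemma gauss_pos (x : ℝ) : 0 < gauss x := Real.exp_pos _

lemma continuous_gauss : Continuous gauss :=
  Real.continuous_exp.comp (((continuous_pow 2).div_const 2).neg)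

lemma monomial_bound (n : ℕ) (x : ℝ) :
    ‖x ^ n * gauss x‖ ≤ (n ! : ℝ) * Real.exp 1 * Real.exp (-(x ^ 2 / 4)) := by
  have h1 : |x| ^ n ≤ (n ! : ℝ) * Real.exp |x| := by
    have h := Real.pow_div_factorial_le_exp (x := |x|) (abs_nonneg x) n
    have hn : (0:ℝ) < n ! := by positivity
    calc |x| ^ n = (|x| ^ n / n !) * n ! := by field_simp
    _ ≤ Real.exp |x| * n ! := by gcongr
    _ = (n ! : ℝ) * Real.exp |x| := by ring
  have h2 : ‖x ^ n * gauss x‖ = |x| ^ n * gauss x := by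
    rw [norm_mul, norm_pow, Real.norm_eq_abs, Real.norm_eq_abs,
      abs_of_pos (gauss_pos x)]
  rw [h2]
  calc |x| ^ n * gauss x ≤ ((n ! : ℝ) * Real.exp |x|) * gauss x := by
        have := (gauss_pos x).le
        gcongr
    _ = (n ! : ℝ) * Real.exp (|x| + -(x ^ 2 / 2)) := by
        rw [gauss, mul_assoc, ← Real.exp_add]
    _ ≤ (n ! : ℝ) * Real.exp (1 + -(x ^ 2 / 4)) := by
        have hx : |x| + -(x ^ 2 / 2) ≤ 1 + -(x ^ 2 / 4) := by
          nlinarith [sq_nonneg (|x| - 2), sq_abs x]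
        have hn : (0:ℝ) ≤ n ! := by positivity
        gcongr
    _ = (n ! : ℝ) * Real.exp 1 * Real.exp (-(x ^ 2 / 4)) := by
        rw [Real.exp_add]; ring

lemma poly_bound (p : ℤ[X]) : ∃ C : ℝ, ∀ x : ℝ,
    ‖(aeval x p : ℝ) * gauss x‖ ≤ C * Real.exp (-(x ^ 2 / 4)) := by
  refine ⟨∑ i ∈ Finset.range (p.natDegree + 1),
    |(p.coeff i : ℝ)| * ((i)! * Real.exp 1), fun x => ?_⟩
  have hsum : (aeval x p : ℝ) * gauss x
      = ∑ i ∈ Finset.range (p.natDegree + 1), (p.coeff i : ℝ) * (x ^ i * gauss x) := by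
    rw [Polynomial.aeval_eq_sum_range, Finset.sum_mul]
    refine Finset.sum_congr rfl fun i _ => ?_
    simp [zsmul_eq_mul, mul_assoc]
  rw [hsum]
  calc ‖∑ i ∈ Finset.range (p.natDegree + 1), (p.coeff i : ℝ) * (x ^ i * gauss x)‖
      ≤ ∑ i ∈ Finset.range (p.natDegree + 1), ‖(p.coeff i : ℝ) * (x ^ i * gauss x)‖ :=
        norm_sum_le _ _
    _ ≤ ∑ i ∈ Finset.range (p.natDegree + 1),
        |(p.coeff i : ℝ)| * ((i)! * Real.exp 1 * Real.exp (-(x ^ 2 / 4))) := by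
        refine Finset.sum_le_sum fun i _ => ?_
        rw [norm_mul, Real.norm_eq_abs]
        exact mul_le_mul_of_nonneg_left (monomial_bound i x) (abs_nonneg _)
    _ = (∑ i ∈ Finset.range (p.natDegree + 1),
        |(p.coeff i : ℝ)| * ((i)! * Real.exp 1)) * Real.exp (-(x ^ 2 / 4)) := by
        rw [Finset.sum_mul]
        exact Finset.sum_congr rfl fun i _ => by ring

lemma integrable_poly_gauss (p : ℤ[X]) :
    Integrable (fun x : ℝ => (aeval x p : ℝ) * gauss x) := by
  obtain ⟨C, hC⟩ := poly_bound p
  have hg : Integrable (fun x : ℝ => C * Real.exp (-(x ^ 2 / 4))) := by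
    have h : Integrable (fun x : ℝ => Real.exp (-(4:ℝ)⁻¹ * x ^ 2)) :=
      integrable_exp_neg_mul_sq (by norm_num)
    have he : (fun x : ℝ => C * Real.exp (-(x ^ 2 / 4)))
        = fun x : ℝ => C * Real.exp (-(4:ℝ)⁻¹ * x ^ 2) := by
      funext x; congr 1; ring
    rw [he]; exact h.const_mul C
  refine hg.mono' ?_ (ae_of_all _ hC)
  exact ((p.continuous_aeval).mul continuous_gauss).aestronglyMeasurable

lemma tendsto_poly_gauss (p : ℤ[X]) {l : Filter ℝ}
    (hl : Tendsto (fun x : ℝ => x ^ 2) l atTop) :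
    Tendsto (fun x : ℝ => (aeval x p : ℝ) * gauss x) l (nhds 0) := by
  obtain ⟨C, hC⟩ := poly_bound p
  have h1 : Tendsto (fun x : ℝ => -(x ^ 2 / 4)) l atBot := by
    apply tendsto_neg_atBot_iff.mpr
    exact hl.atTop_div_const (by norm_num)
  have h2 : Tendsto (fun x : ℝ => C * Real.exp (-(x ^ 2 / 4))) l (nhds 0) := by
    simpa using (Real.tendsto_exp_atBot.comp h1).const_mul C
  exact squeeze_zero_norm hC h2


lemma hasDerivAt_gauss (x : ℝ) : HasDerivAt gauss (-x * gauss x) x := by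
  have h : HasDerivAt (fun y : ℝ => -(y ^ 2 / 2)) (-x) x := by
    have := ((hasDerivAt_pow 2 x).div_const 2).neg
    exact this.congr_deriv (by norm_num)
  have := h.exp
  rw [show gauss = fun y : ℝ => Real.exp (-(y ^ 2 / 2)) from rfl]
  simpa [gauss, mul_comm] using this

lemma hasDerivAt_H (j : ℕ) (x : ℝ) :
    HasDerivAt (fun y : ℝ => (aeval y (hermite j) : ℝ) * gauss y)
      (-((aeval x (hermite (j + 1)) : ℝ) * gauss x)) x := by
  have h1 : HasDerivAt (fun y : ℝ => (aeval y (hermite j) : ℝ))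
      (aeval x (derivative (hermite j))) x := (Polynomial.hermite j).hasDerivAt_aeval x
  have := h1.mul (hasDerivAt_gauss x)
  refine this.congr_deriv ?_
  rw [hermite_succ]
  simp only [map_sub, map_mul, aeval_X]
  ring

lemma tendsto_sq_atTop : Tendsto (fun x : ℝ => x ^ 2) atTop atTop :=
  tendsto_pow_atTop two_ne_zero

lemma tendsto_sq_atBot : Tendsto (fun x : ℝ => x ^ 2) atBot atTop := by
  have := tendsto_sq_atTop.comp tendsto_neg_atBot_atTop
  simpa [Function.comp_def] using this

lemma aeval_mul_gauss_eq (p q : ℤ[X]) :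
    (fun x : ℝ => (aeval x p : ℝ) * ((aeval x q : ℝ) * gauss x))
      = fun x : ℝ => (aeval x (p * q) : ℝ) * gauss x := by
  funext x; simp only [map_mul]; ring

lemma ibp (p : ℤ[X]) (j : ℕ) :
    (∫ x : ℝ, (aeval x p : ℝ) * ((aeval x (hermite (j + 1)) : ℝ) * gauss x))
      = ∫ x : ℝ, (aeval x (derivative p) : ℝ) * ((aeval x (hermite j) : ℝ) * gauss x) := by
  set f : ℝ → ℝ := fun x => (aeval x p : ℝ) * ((aeval x (hermite j) : ℝ) * gauss x) with hf
  set g : ℝ → ℝ := fun x => (aeval x (derivative p) : ℝ) * ((aeval x (hermite j) : ℝ) * gauss x)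
      - (aeval x p : ℝ) * ((aeval x (hermite (j + 1)) : ℝ) * gauss x) with hg
  have hfg : ∀ x : ℝ, HasDerivAt f (g x) x := by
    intro x
    have := (p.hasDerivAt_aeval x).mul (hasDerivAt_H j x)
    refine this.congr_deriv ?_
    simp only [hg]; ring
  have hA : Integrable (fun x : ℝ => (aeval x (derivative p) : ℝ) * ((aeval x (hermite j) : ℝ) * gauss x)) := by
    rw [aeval_mul_gauss_eq]; exact integrable_poly_gauss _
  have hB : Integrable (fun x : ℝ => (aeval x p : ℝ) * ((aeval x (hermite (j + 1)) : ℝ) * gauss x)) := by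
    rw [aeval_mul_gauss_eq]; exact integrable_poly_gauss _
  have hgint : Integrable g := hA.sub hB
  have htop : Tendsto f atTop (nhds 0) := by
    rw [hf, aeval_mul_gauss_eq]; exact tendsto_poly_gauss _ tendsto_sq_atTop
  have hbot : Tendsto f atBot (nhds 0) := by
    rw [hf, aeval_mul_gauss_eq]; exact tendsto_poly_gauss _ tendsto_sq_atBot
  have h1 : (∫ x in Iic (0:ℝ), g x) = f 0 - 0 :=
    integral_Iic_of_hasDerivAt_of_tendsto (hfg 0).continuousAt.continuousWithinAt
      (fun x _ => hfg x) hgint.integrableOn hbot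
  have h2 : (∫ x in Ioi (0:ℝ), g x) = 0 - f 0 :=
    integral_Ioi_of_hasDerivAt_of_tendsto (hfg 0).continuousAt.continuousWithinAt
      (fun x _ => hfg x) hgint.integrableOn htop
  have h3 : (∫ x : ℝ, g x) = 0 := by
    rw [← intervalIntegral.integral_Iic_add_Ioi hgint.integrableOn hgint.integrableOn, h1, h2]; ring
  have h4 : (∫ x : ℝ, g x) = (∫ x : ℝ, (aeval x (derivative p) : ℝ) * ((aeval x (hermite j) : ℝ) * gauss x))
      - ∫ x : ℝ, (aeval x p : ℝ) * ((aeval x (hermite (j + 1)) : ℝ) * gauss x) := integral_sub hA hB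
  rw [h4] at h3
  linarith

lemma ibp_iter (j : ℕ) : ∀ p : ℤ[X],
    (∫ x : ℝ, (aeval x p : ℝ) * ((aeval x (hermite j) : ℝ) * gauss x))
      = ∫ x : ℝ, (aeval x (derivative^[j] p) : ℝ) * gauss x := by
  induction j with
  | zero => intro p; simp only [Function.iterate_zero_apply, hermite_zero, map_one, one_mul]
  | succ j ih =>
    intro p
    rw [ibp p j, ih (derivative p), Function.iterate_succ_apply]

lemma integral_gauss : (∫ x : ℝ, gauss x) = Real.sqrt (2 * π) := by
  have h : (fun x : ℝ => gauss x) = fun x : ℝ => Real.exp (-(2:ℝ)⁻¹ * x ^ 2) := by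
    funext x; simp only [gauss]; congr 1; ring
  rw [h, integral_gaussian]
  congr 1
  field_simp

lemma norm_sq (k : ℕ) :
    (∫ x : ℝ, (aeval x (hermite k) : ℝ) * ((aeval x (hermite k) : ℝ) * gauss x))
      = (k ! : ℝ) * Real.sqrt (2 * π) := by
  rw [ibp_iter k (hermite k)]
  have hd : derivative^[k] (hermite k) = C (k ! : ℤ) := by
    have h1 : (derivative^[k] (hermite k)).natDegree ≤ 0 := by
      simpa [natDegree_hermite] using natDegree_iterate_derivative (hermite k) k
    rw [Polynomial.eq_C_of_natDegree_le_zero h1]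
    congr 1
    rw [coeff_iterate_derivative]
    simp [coeff_hermite_self, Nat.descFactorial_self]
  rw [hd]
  have hc : ∀ x : ℝ, (aeval x (C (k ! : ℤ)) : ℝ) = (k ! : ℝ) := fun x => by simp
  simp only [hc]
  rw [integral_const_mul, integral_gauss]


lemma numerator (m : ℕ) :
    (∫ x in Ioi (0:ℝ), x * ((aeval x (hermite (m + 2)) : ℝ) * gauss x))
      = ((hermite m).coeff 0 : ℝ) := by
  set F : ℝ → ℝ := fun x => -(x * ((aeval x (hermite (m + 1)) : ℝ) * gauss x))
      - (aeval x (hermite m) : ℝ) * gauss x with hF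
  have hXmul : ∀ q : ℤ[X], (fun x : ℝ => x * ((aeval x q : ℝ) * gauss x))
      = fun x : ℝ => (aeval x (X * q) : ℝ) * gauss x := by
    intro q; funext x; simp only [map_mul, aeval_X]; ring
  have hder : ∀ x : ℝ, HasDerivAt F (x * ((aeval x (hermite (m + 2)) : ℝ) * gauss x)) x := by
    intro x
    have h1 := (hasDerivAt_id x).mul (hasDerivAt_H (m + 1) x)
    have h2 := hasDerivAt_H m x
    have := h1.neg.sub h2
    refine this.congr_deriv ?_
    simp only [id_eq]
    ring
  have hint : IntegrableOn (fun x : ℝ => x * ((aeval x (hermite (m + 2)) : ℝ) * gauss x)) (Ioi 0) := by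
    rw [hXmul]
    exact (integrable_poly_gauss _).integrableOn
  have htop : Tendsto F atTop (nhds 0) := by
    have t1 : Tendsto (fun x : ℝ => x * ((aeval x (hermite (m + 1)) : ℝ) * gauss x)) atTop (nhds 0) := by
      rw [hXmul]; exact tendsto_poly_gauss _ tendsto_sq_atTop
    have t2 : Tendsto (fun x : ℝ => (aeval x (hermite m) : ℝ) * gauss x) atTop (nhds 0) :=
      tendsto_poly_gauss _ tendsto_sq_atTop
    simpa only [neg_zero, sub_zero] using t1.neg.sub t2
  have hkey := integral_Ioi_of_hasDerivAt_of_tendsto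
    (hder 0).continuousAt.continuousWithinAt (fun x _ => hder x) hint htop
  rw [hkey]
  have hg0 : gauss 0 = 1 := by simp [gauss]
  simp only [hF, hg0, zero_mul, neg_zero, mul_one, zero_sub, neg_neg, sub_zero, zero_add]
  rw [← Polynomial.coeff_zero_eq_aeval_zero']
  simp

lemma pdf_eq (x : ℝ) : gaussianPDFReal 0 1 x = (Real.sqrt (2 * π))⁻¹ * gauss x := by
  simp only [gaussianPDFReal, gauss, NNReal.coe_one, mul_one, sub_zero, neg_div]

lemma integral_gaussianReal_eq (g : ℝ → ℝ) :
    (∫ x, g x ∂(gaussianReal 0 1)) = (Real.sqrt (2 * π))⁻¹ * ∫ x, g x * gauss x := by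
  rw [gaussianReal_of_var_ne_zero _ one_ne_zero]
  have hpdf : gaussianPDF 0 1 = fun x => ((Real.toNNReal (gaussianPDFReal 0 1 x) : ℝ≥0) : ℝ≥0∞) := rfl
  rw [hpdf, integral_withDensity_eq_integral_smul
    ((measurable_gaussianPDFReal 0 1).real_toNNReal) g]
  have : ∀ x : ℝ, (Real.toNNReal (gaussianPDFReal 0 1 x)) • g x
      = (Real.sqrt (2 * π))⁻¹ * (g x * gauss x) := by
    intro x
    rw [NNReal.smul_def, Real.coe_toNNReal _ (gaussianPDFReal_nonneg 0 1 x), pdf_eq,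
      smul_eq_mul]
    ring
  rw [MeasureTheory.integral_congr_ae (ae_of_all _ this)]
  rw [integral_const_mul]


lemma X_mul_gauss_eq (q : ℤ[X]) :
    (fun x : ℝ => x * ((aeval x q : ℝ) * gauss x))
      = fun x : ℝ => (aeval x (X * q) : ℝ) * gauss x := by
  funext x; simp only [map_mul, aeval_X]; ring


end S11

open S11

/-- explicit formula for the even Hermite coefficients of ReLU. -/
theorem statement11 (k : ℕ) (hk : 4 ≤ k) (hke : Even k) :
    hermiteCoeff relu k =
      (Real.sqrt (2 * Real.pi))⁻¹ * (-1 : ℝ) ^ ((k - 2) / 2) *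
        (Nat.doubleFactorial (k - 3) : ℝ) / Real.sqrt (Nat.factorial k) := by
  obtain ⟨m, rfl⟩ : ∃ m, k = m + 2 := ⟨k - 2, by omega⟩
  have hme : Even m := by rcases hke with ⟨a, ha⟩; exact ⟨a - 1, by omega⟩
  have hN : (∫ z, relu z * hermiteFun (m + 2) z ∂(gaussianReal 0 1))
      = (Real.sqrt (2 * π))⁻¹ * ((hermite m).coeff 0 : ℝ) := by
    rw [integral_gaussianReal_eq]
    congr 1
    have hfun : (fun x : ℝ => relu x * hermiteFun (m + 2) x * gauss x)
        = fun x : ℝ => relu x * ((aeval x (hermite (m + 2)) : ℝ) * gauss x) := by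
      funext x; rw [hermiteFun]; ring
    rw [hfun]
    have hfint : Integrable (fun x : ℝ => relu x * ((aeval x (hermite (m + 2)) : ℝ) * gauss x)) := by
      refine Integrable.mono' (integrable_poly_gauss (X * hermite (m + 2))).norm ?_ (ae_of_all _ ?_)
      · exact ((continuous_id.max continuous_const).mul
          (((hermite (m + 2)).continuous_aeval).mul continuous_gauss)).aestronglyMeasurable
      · intro x
        have hr : |relu x| ≤ |x| := by
          rcases le_total x 0 with h | h
          · rw [relu, max_eq_right h]; simp
          · rw [relu, max_eq_left h]
        calc ‖relu x * ((aeval x (hermite (m + 2)) : ℝ) * gauss x)‖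
            = |relu x| * ‖(aeval x (hermite (m + 2)) : ℝ) * gauss x‖ := by
              rw [norm_mul, Real.norm_eq_abs]
          _ ≤ |x| * ‖(aeval x (hermite (m + 2)) : ℝ) * gauss x‖ := by
              gcongr
          _ = ‖x * ((aeval x (hermite (m + 2)) : ℝ) * gauss x)‖ := by
              simp [Real.norm_eq_abs, abs_mul, mul_assoc]
          _ = ‖(aeval x (X * hermite (m + 2)) : ℝ) * gauss x‖ := by
              rw [congrFun (X_mul_gauss_eq (hermite (m + 2))) x]
    rw [← intervalIntegral.integral_Iic_add_Ioi hfint.integrableOn hfint.integrableOn]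
    have h0 : (∫ x in Iic (0:ℝ), relu x * ((aeval x (hermite (m + 2)) : ℝ) * gauss x)) = 0 := by
      rw [setIntegral_congr_fun measurableSet_Iic
        (g := fun _ => (0:ℝ)) (fun x hx => by rw [relu, max_eq_right hx]; ring)]
      simp
    have h1 : (∫ x in Ioi (0:ℝ), relu x * ((aeval x (hermite (m + 2)) : ℝ) * gauss x))
        = ((hermite m).coeff 0 : ℝ) := by
      rw [setIntegral_congr_fun measurableSet_Ioi
        (g := fun x : ℝ => x * ((aeval x (hermite (m + 2)) : ℝ) * gauss x))
        (fun x hx => by rw [relu, max_eq_left (le_of_lt hx)]), numerator m]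
    rw [h0, h1, zero_add]
  have h2π : Real.sqrt (2 * π) ≠ 0 := ne_of_gt (Real.sqrt_pos.mpr (by positivity))
  have hD : (∫ z, hermiteFun (m + 2) z ^ 2 ∂(gaussianReal 0 1)) = ((m + 2)! : ℝ) := by
    rw [integral_gaussianReal_eq]
    have hfun : (fun x : ℝ => hermiteFun (m + 2) x ^ 2 * gauss x)
        = fun x : ℝ => (aeval x (hermite (m + 2)) : ℝ) * ((aeval x (hermite (m + 2)) : ℝ) * gauss x) := by
      funext x; rw [hermiteFun]; ring
    rw [hfun, norm_sq]
    field_simp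
  have hc : ((hermite m).coeff 0 : ℝ) = (-1 : ℝ) ^ (m / 2) * ((m - 1)‼ : ℝ) := by
    rw [coeff_hermite_of_even_add (by simpa using hme)]
    push_cast
    simp
  rw [hermiteCoeff, hN, hD, hc]
  have e1 : m + 2 - 2 = m := by omega
  have e2 : m + 2 - 3 = m - 1 := by omega
  rw [e1, e2]
  ring
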